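/- For the last-touch attribution rule, the user × publisher × advertiser adjacency relation with post-attribution contribution bound enforcement is invalid: for any integer p > 1 there exist adjacent datasets D and D' (differing by all impressions of one (user, publisher, advertiser) triple), with contribution bound r = 1, such that ‖attr(D) - attr(D')‖₁ ≥ p - 1. -/

import Mathlib

/-! Framework for differentially private ad conversion measurement
(Delaney et al., "Differentially Private Ad Conversion Measurement"). -/

structure Impression where
  time : ℕ
  user : ℕ
  pub : ℕ
  adv : ℕ
  id : ℕ
deriving DecidableEq

structure Conversion where
  time : ℕ
  user : ℕ
  adv : ℕ
  id : ℕ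
deriving DecidableEq

structure Dataset where
  imps : List Impression
  convs : List Conversion

/-- An attribution rule maps a time-ordered list of impressions and a conversion
to a list of credits (one per impression). -/
abbrev AttrRule := List Impression → Conversion → List ℝ

/-- A valid attribution rule outputs one nonnegative weight per impression, summing to 1. -/
def ValidRule (a : AttrRule) : Prop :=
  ∀ is c, is ≠ [] →
    (a is c).length = is.length ∧ (a is c).sum = 1 ∧ ∀ w ∈ a is c, (0 : ℝ) ≤ w

/-- Impressions eligible for attribution of conversion `c`: those occurring earlier
with the same user and advertiser. -/
def eligible (D : Dataset) (c : Conversion) : List Impression :=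
  D.imps.filter fun i => decide (i.time < c.time ∧ i.user = c.user ∧ i.adv = c.adv)

/-- ℓ₁ distance between attributed datasets. -/
noncomputable def l1dist (w w' : (Impression × Conversion) →₀ ℝ) : ℝ :=
  (w - w').sum fun _ v => |v|

/-- Impressions and conversions are listed in time order. -/
def SortedDS (D : Dataset) : Prop :=
  D.imps.Pairwise (fun i j => i.time ≤ j.time) ∧
  D.convs.Pairwise (fun c c' => c.time ≤ c'.time)

/-- Inner loop of post-attribution contribution-bound enforcement: each weighted
(impression, conversion) pair is kept only if the remaining bound of its scope covers
the weight, in which case the weight is deducted. -/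
noncomputable def applyPairs {σ : Type} [DecidableEq σ] (s : Impression → σ) (c : Conversion) :
    List (Impression × ℝ) → (σ → ℝ) × ((Impression × Conversion) →₀ ℝ) →
      (σ → ℝ) × ((Impression × Conversion) →₀ ℝ)
  | [], st => st
  | (i, w) :: rest, st =>
      if w ≤ st.1 (s i) then
        applyPairs s c rest
          (Function.update st.1 (s i) (st.1 (s i) - w), st.2 + Finsupp.single (i, c) w)
      else
        applyPairs s c rest st

/-- Attribution with post-attribution contribution bound enforcement (Algorithm 1),
with contribution bounding scope map `s` and contribution bound `r`. -/
noncomputable def postAttr {σ : Type} [DecidableEq σ] (a : AttrRule) (s : Impression → σ)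
    (r : ℝ) (D : Dataset) : (Impression × Conversion) →₀ ℝ :=
  (D.convs.foldl
    (fun st c => applyPairs s c ((eligible D c).zip (a (eligible D c) c)) st)
    ((fun _ => r : σ → ℝ), (0 : (Impression × Conversion) →₀ ℝ))).2

/-- Attribution with pre-attribution contribution bound enforcement (Algorithm 2):
for each conversion, every scope with an eligible impression pays one unit of its bound
if available, otherwise its impressions are excluded from attribution. -/
noncomputable def preAttr {σ : Type} [DecidableEq σ] (a : AttrRule) (s : Impression → σ)
    (r : ℝ) (D : Dataset) : (Impression × Conversion) →₀ ℝ :=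
  (D.convs.foldl
    (fun (st : (σ → ℝ) × ((Impression × Conversion) →₀ ℝ)) c =>
      let el := eligible D c
      let surv := el.filter fun i => decide ((1 : ℝ) ≤ st.1 (s i))
      let scopes := (el.map s).dedup
      ((fun x => if x ∈ scopes ∧ (1 : ℝ) ≤ st.1 x then st.1 x - 1 else st.1 x : σ → ℝ),
        st.2 + ((surv.zip (a surv c)).map fun p => Finsupp.single (p.1, c) p.2).sum))
    ((fun _ => r : σ → ℝ), (0 : (Impression × Conversion) →₀ ℝ))).2

/-- Attribution without any contribution bound enforcement. -/
noncomputable def attrNoCap (a : AttrRule) (D : Dataset) :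
    (Impression × Conversion) →₀ ℝ :=
  (D.convs.map fun c =>
    (((eligible D c).zip (a (eligible D c) c)).map fun p => Finsupp.single (p.1, c) p.2).sum).sum

/-- Adjacency: `D'` results from `D` by adding a single impression (in time order). -/
def AddOneImpression (D D' : Dataset) : Prop :=
  ∃ (i0 : Impression) (l₁ l₂ : List Impression),
    D.imps = l₁ ++ l₂ ∧ D'.imps = l₁ ++ i0 :: l₂ ∧ D.convs = D'.convs

/-- Adjacency: `D` results from `D'` by removing all impressions whose scope (under `si`)
is `v` and all conversions whose scope (under `sc`) is `v`. -/
def RemovesScope {σ : Type} [DecidableEq σ] (si : Impression → σ)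
    (sc : Conversion → Option σ) (v : σ) (D D' : Dataset) : Prop :=
  D.imps = D'.imps.filter (fun i => decide (si i ≠ v)) ∧
  D.convs = D'.convs.filter (fun c => decide (sc c ≠ some v))

/-- First-touch attribution. -/
noncomputable def FTA : AttrRule := fun is _ =>
  match is with
  | [] => []
  | _ :: t => 1 :: t.map fun _ => 0

/-- Last-touch attribution. -/
noncomputable def LTA : AttrRule := fun is _ =>
  match is with
  | [] => []
  | _ :: _ => List.replicate (is.length - 1) 0 ++ [1]

/-- Uniform multi-touch attribution. -/
noncomputable def UNI : AttrRule := fun is _ => is.map fun _ => ((is.length : ℝ))⁻¹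

/-- U-shaped attribution. -/
noncomputable def USH : AttrRule := fun is _ =>
  match is with
  | [] => []
  | [_] => [1]
  | [_, _] => [0.5, 0.5]
  | _ :: _ :: _ :: _ =>
      (0.4 : ℝ) :: (List.replicate (is.length - 2) ((0.2 : ℝ) / ((is.length : ℝ) - 2)) ++ [0.4])

/-- Exponential time decay attribution with half-life `th`. -/
noncomputable def EXPR (th : ℝ) : AttrRule := fun is c =>
  let wt : Impression → ℝ := fun i => (2 : ℝ) ^ (-(((c.time : ℝ) - (i.time : ℝ)) / th))
  is.map fun i => wt i / (is.map wt).sum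


namespace Thm53

/-- Impression on publisher `k+1` at time `4k`. -/
def A (k : ℕ) : Impression := ⟨4*k, 0, k+1, 0, k⟩
/-- Impression on publisher `0` (the removed publisher) at time `4k+1`. -/
def B (k : ℕ) : Impression := ⟨4*k+1, 0, 0, 0, k⟩
/-- Conversion at time `4k+2`. -/
def C (k : ℕ) : Conversion := ⟨4*k+2, 0, 0, k⟩
/-- Interleaving of the `A` and `B` impressions. -/
def g (m : ℕ) : Impression := if m % 2 = 0 then A (m/2) else B (m/2)

lemma A_time (k : ℕ) : (A k).time = 4*k := rfl
lemma A_user (k : ℕ) : (A k).user = 0 := rfl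
lemma A_adv (k : ℕ) : (A k).adv = 0 := rfl
lemma C_time (k : ℕ) : (C k).time = 4*k+2 := rfl
lemma C_user (k : ℕ) : (C k).user = 0 := rfl
lemma C_adv (k : ℕ) : (C k).adv = 0 := rfl

abbrev sc : Impression → ℕ × ℕ × ℕ := fun i => (i.user, i.pub, i.adv)

lemma g_time (m : ℕ) : (g m).time = 2*m - m % 2 := by
  unfold g; split <;> simp only [A, B] <;> omega

lemma g_user (m : ℕ) : (g m).user = 0 := by unfold g; split <;> rfl
lemma g_adv (m : ℕ) : (g m).adv = 0 := by unfold g; split <;> rfl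

lemma g_even (n : ℕ) : g (2*n) = A n := by
  unfold g
  have h1 : (2*n) % 2 = 0 := by omega
  have h2 : (2*n) / 2 = n := by omega
  rw [if_pos h1, h2]

lemma g_odd (n : ℕ) : g (2*n+1) = B n := by
  unfold g
  have h1 : (2*n+1) % 2 ≠ 0 := by omega
  have h2 : (2*n+1) / 2 = n := by omega
  rw [if_neg h1, h2]

lemma applyPairs_append {σ : Type} [DecidableEq σ] (s : Impression → σ) (c : Conversion)
    (l1 l2 : List (Impression × ℝ)) (st) :
    applyPairs s c (l1 ++ l2) st = applyPairs s c l2 (applyPairs s c l1 st) := by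
  induction l1 generalizing st with
  | nil => rfl
  | cons h t ih =>
    obtain ⟨i, w⟩ := h
    simp only [List.cons_append, applyPairs]
    split <;> apply ih

lemma applyPairs_zeros {σ : Type} [DecidableEq σ] (s : Impression → σ) (c : Conversion)
    (l : List (Impression × ℝ)) (hl : ∀ pr ∈ l, pr.2 = 0) (st) :
    applyPairs s c l st = st := by
  induction l generalizing st with
  | nil => rfl
  | cons h t ih =>
    obtain ⟨i, w⟩ := h
    have hw : w = 0 := hl (i, w) (by simp)
    subst hw
    simp only [applyPairs]
    have hupd : (Function.update st.1 (s i) (st.1 (s i) - 0),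
        st.2 + Finsupp.single (i, c) (0:ℝ)) = st := by
      rw [sub_zero, Function.update_eq_self, Finsupp.single_zero, add_zero]
    split
    · rw [hupd]; exact ih (fun pr hpr => hl pr (List.mem_cons_of_mem _ hpr)) st
    · exact ih (fun pr hpr => hl pr (List.mem_cons_of_mem _ hpr)) st

lemma range_filter_lt (M N : ℕ) (h : M ≤ N) :
    (List.range N).filter (fun m => decide (m < M)) = List.range M := by
  obtain ⟨d, rfl⟩ := Nat.exists_eq_add_of_le h
  rw [List.range_add, List.filter_append]
  have h1 : (List.range M).filter (fun m => decide (m < M)) = List.range M := by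
    apply List.filter_eq_self.2
    intro a ha
    simp only [List.mem_range] at ha
    simpa using ha
  have h2 : ((List.range d).map (fun x => M + x)).filter (fun m => decide (m < M)) = [] := by
    apply List.filter_eq_nil_iff.2
    intro a ha
    simp only [List.mem_map] at ha
    obtain ⟨x, _, rfl⟩ := ha
    simp
  rw [h1, h2, List.append_nil]

lemma LTA_eq (l : List Impression) (c : Conversion) (h : l ≠ []) :
    LTA l c = List.replicate (l.length - 1) 0 ++ [1] := by
  cases l with
  | nil => exact absurd rfl h
  | cons a t => rfl

/-- Budget state after `j` conversions in `D`. -/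
noncomputable def bD (j : ℕ) : ℕ × ℕ × ℕ → ℝ :=
  fun x => if x.1 = 0 ∧ x.2.2 = 0 ∧ 1 ≤ x.2.1 ∧ x.2.1 ≤ j then 0 else 1

lemma bD_apply (j a b c : ℕ) :
    bD j (a, b, c) = if a = 0 ∧ c = 0 ∧ 1 ≤ b ∧ b ≤ j then 0 else 1 := rfl

/-- Attribution after `j` conversions in `D`. -/
noncomputable def wD (j : ℕ) : (Impression × Conversion) →₀ ℝ :=
  ∑ k ∈ Finset.range j, Finsupp.single (A k, C k) 1

/-- Budget state after `j` conversions in `D'`. -/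
noncomputable def bD' (j : ℕ) : ℕ × ℕ × ℕ → ℝ :=
  fun x => if x = (0, 0, 0) ∧ 1 ≤ j then 0 else 1

lemma bD'_apply (j a b c : ℕ) :
    bD' j (a, b, c) = if a = 0 ∧ b = 0 ∧ c = 0 ∧ 1 ≤ j then 0 else 1 := by
  show (if (a, b, c) = ((0:ℕ), (0:ℕ), (0:ℕ)) ∧ 1 ≤ j then (0:ℝ) else 1) = _
  refine if_congr ?_ rfl rfl
  rw [Prod.mk.injEq, Prod.mk.injEq]
  tauto

/-- Attribution after `j` conversions in `D'`. -/
noncomputable def wD' (j : ℕ) : (Impression × Conversion) →₀ ℝ :=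
  if j = 0 then 0 else Finsupp.single (B 0, C 0) 1

section Main
variable (p : ℕ)

/-- The dataset `D` (publisher `0` removed). -/
def DD : Dataset := ⟨(List.range (p-1)).map A, (List.range (p-1)).map C⟩
/-- The dataset `D'`. -/
def DD' : Dataset := ⟨(List.range (2*(p-1))).map g, (List.range (p-1)).map C⟩

lemma eligible_DD (n : ℕ) (hn : n + 1 ≤ p - 1) :
    eligible (DD p) (C n) = (List.range (n+1)).map A := by
  unfold eligible DD
  rw [List.filter_map]
  have hcong : ∀ x ∈ List.range (p-1),
      ((fun i => decide (i.time < (C n).time ∧ i.user = (C n).user ∧ i.adv = (C n).adv)) ∘ A) x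
        = (fun m => decide (m < n+1)) x := by
    intro x _
    simp only [Function.comp, A_time, A_user, A_adv, C_time, C_user, C_adv,
      decide_eq_decide, and_true, true_and]
    omega
  rw [List.filter_congr hcong, range_filter_lt _ _ hn]

lemma eligible_DD' (n : ℕ) (hn : n + 1 ≤ p - 1) :
    eligible (DD' p) (C n) = (List.range (2*n+2)).map g := by
  unfold eligible DD'
  rw [List.filter_map]
  have hcong : ∀ x ∈ List.range (2*(p-1)),
      ((fun i => decide (i.time < (C n).time ∧ i.user = (C n).user ∧ i.adv = (C n).adv)) ∘ g) x
        = (fun m => decide (m < 2*n+2)) x := by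
    intro x _
    simp only [Function.comp, g_time, g_user, g_adv, C_time, C_user, C_adv,
      decide_eq_decide, and_true, true_and]
    omega
  rw [List.filter_congr hcong, range_filter_lt _ _ (by omega)]

lemma zip_zeros {α : Type} (l : List α) (n : ℕ) :
    ∀ pr ∈ l.zip (List.replicate n (0:ℝ)), pr.2 = 0 := by
  rintro ⟨a, b⟩ hpr
  exact List.eq_of_mem_replicate (List.of_mem_zip hpr).2

lemma foldD (n : ℕ) (hn : n ≤ p - 1) :
    ((List.range n).map C).foldl
      (fun st c => applyPairs sc c
        ((eligible (DD p) c).zip (LTA (eligible (DD p) c) c)) st)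
      ((fun _ => 1 : ℕ × ℕ × ℕ → ℝ), (0 : (Impression × Conversion) →₀ ℝ))
    = (bD n, wD n) := by
  induction n with
  | zero =>
    simp only [List.range_zero, List.map_nil, List.foldl_nil]
    have h1 : bD 0 = fun _ => 1 := by
      funext x; obtain ⟨a, b, c⟩ := x
      rw [bD_apply]; rw [if_neg (by omega)]
    have h2 : wD 0 = 0 := by simp [wD]
    rw [h1, h2]
  | succ n ih =>
    rw [List.range_succ, List.map_append, List.foldl_append, ih (by omega)]
    simp only [List.map_cons, List.map_nil, List.foldl_cons, List.foldl_nil]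
    rw [eligible_DD p n hn]
    have hlen : ((List.range (n+1)).map A).length = n + 1 := by simp
    rw [LTA_eq _ _ (by simp), hlen]
    have hsplit : (List.range (n+1)).map A = (List.range n).map A ++ [A n] := by
      rw [List.range_succ, List.map_append]; rfl
    rw [hsplit]
    have hzip : ((List.range n).map A ++ [A n]).zip
        (List.replicate (n+1-1) (0:ℝ) ++ [1])
        = ((List.range n).map A).zip (List.replicate n (0:ℝ)) ++ [(A n, 1)] := by
      rw [List.zip_append (by simp)]; rfl
    rw [hzip, applyPairs_append, applyPairs_zeros sc _ _ (zip_zeros _ _)]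
    have hsc : sc (A n) = (0, n+1, 0) := rfl
    have hbd : bD n (0, n+1, 0) = 1 := by
      rw [bD_apply]; rw [if_neg (by omega)]
    simp only [applyPairs, hsc, hbd]
    rw [if_pos le_rfl]
    congr 1
    · funext x
      obtain ⟨a, b, c⟩ := x
      by_cases hx : (a, b, c) = ((0:ℕ), n+1, (0:ℕ))
      · rw [hx, Function.update_self, bD_apply]
        rw [if_pos (by omega)]
        norm_num
      · rw [Function.update_of_ne hx, bD_apply, bD_apply]
        have hx' : ¬(a = 0 ∧ b = n+1 ∧ c = 0) := by
          intro h
          exact hx (by rw [h.1, h.2.1, h.2.2])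
        split_ifs with h1 h2 h3 <;> first | rfl | (exfalso; omega)
    · rw [wD, wD, Finset.sum_range_succ]

lemma foldD' (n : ℕ) (hn : n ≤ p - 1) :
    ((List.range n).map C).foldl
      (fun st c => applyPairs sc c
        ((eligible (DD' p) c).zip (LTA (eligible (DD' p) c) c)) st)
      ((fun _ => 1 : ℕ × ℕ × ℕ → ℝ), (0 : (Impression × Conversion) →₀ ℝ))
    = (bD' n, wD' n) := by
  induction n with
  | zero =>
    simp only [List.range_zero, List.map_nil, List.foldl_nil]
    have h1 : bD' 0 = fun _ => 1 := by
      funext x; obtain ⟨a, b, c⟩ := x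
      rw [bD'_apply]; rw [if_neg (by omega)]
    have h2 : wD' 0 = 0 := by simp [wD']
    rw [h1, h2]
  | succ n ih =>
    rw [List.range_succ, List.map_append, List.foldl_append, ih (by omega)]
    simp only [List.map_cons, List.map_nil, List.foldl_cons, List.foldl_nil]
    rw [eligible_DD' p n hn]
    have hlen : ((List.range (2*n+2)).map g).length = 2*n + 2 := by simp
    rw [LTA_eq _ _ (by simp), hlen]
    have hsplit : (List.range (2*n+2)).map g = (List.range (2*n+1)).map g ++ [B n] := by
      rw [show 2*n+2 = (2*n+1)+1 from rfl, List.range_succ, List.map_append,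
        List.map_singleton, g_odd]
    rw [hsplit]
    have hzip : ((List.range (2*n+1)).map g ++ [B n]).zip
        (List.replicate (2*n+2-1) (0:ℝ) ++ [1])
        = ((List.range (2*n+1)).map g).zip (List.replicate (2*n+1) (0:ℝ)) ++ [(B n, 1)] := by
      rw [show 2*n+2-1 = 2*n+1 from rfl, List.zip_append (by simp)]; rfl
    rw [hzip, applyPairs_append, applyPairs_zeros sc _ _ (zip_zeros _ _)]
    have hsc : sc (B n) = (0, 0, 0) := rfl
    rcases Nat.eq_zero_or_pos n with rfl | hpos
    · have hbd : bD' 0 (0, 0, 0) = 1 := by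
        rw [bD'_apply]; rw [if_neg (by omega)]
      simp only [applyPairs, hsc, hbd]
      rw [if_pos le_rfl]
      congr 1
      · funext x
        obtain ⟨a, b, c⟩ := x
        by_cases hx : (a, b, c) = ((0:ℕ), (0:ℕ), (0:ℕ))
        · rw [hx, Function.update_self, bD'_apply]
          rw [if_pos (by omega)]
          norm_num
        · rw [Function.update_of_ne hx, bD'_apply, bD'_apply]
          have hx' : ¬(a = 0 ∧ b = 0 ∧ c = 0) := by
            intro h
            exact hx (by rw [h.1, h.2.1, h.2.2])
          split_ifs with h1 h2 h3 <;> first | rfl | (exfalso; omega)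
      · simp [wD']
    · have hbd : bD' n (0, 0, 0) = 0 := by
        rw [bD'_apply]; rw [if_pos (by omega)]
      simp only [applyPairs, hsc, hbd]
      rw [if_neg (by norm_num)]
      congr 1
      · funext x
        obtain ⟨a, b, c⟩ := x
        rw [bD'_apply, bD'_apply]
        split_ifs with h1 h2 h3 <;> first | rfl | (exfalso; omega)
      · simp only [wD']
        rw [if_neg (by omega), if_neg (by omega)]

lemma postAttr_DD : postAttr LTA sc 1 (DD p) = wD (p-1) := by
  unfold postAttr
  have := foldD p (p-1) le_rfl
  rw [show (DD p).convs = (List.range (p-1)).map C from rfl, this]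

lemma postAttr_DD' (hp : 1 < p) :
    postAttr LTA sc 1 (DD' p) = Finsupp.single (B 0, C 0) 1 := by
  unfold postAttr
  have := foldD' p (p-1) le_rfl
  rw [show (DD' p).convs = (List.range (p-1)).map C from rfl, this]
  simp only [wD']
  rw [if_neg (by omega)]

lemma imps_filter (d : ℕ) :
    ((List.range (2*d)).map g).filter
      (fun i => decide (sc i ≠ ((0:ℕ), (0:ℕ), (0:ℕ)))) = (List.range d).map A := by
  induction d with
  | zero => rfl
  | succ d ih =>
    have h2 : 2*(d+1) = (2*d) + 1 + 1 := by ring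
    rw [h2, List.range_succ, List.range_succ, List.map_append, List.map_append,
      List.filter_append, List.filter_append, ih]
    simp only [List.map_singleton, g_even, g_odd]
    have hfA : List.filter (fun i => decide (sc i ≠ ((0:ℕ),(0:ℕ),(0:ℕ)))) [A d] = [A d] := by
      simp [sc, A]
    have hfB : List.filter (fun i => decide (sc i ≠ ((0:ℕ),(0:ℕ),(0:ℕ)))) [B d] = [] := by
      simp [sc, B]
    rw [hfA, hfB, List.append_nil, List.range_succ, List.map_append, List.map_singleton]

lemma sorted_DD' : SortedDS (DD' p) := by
  constructor
  · show List.Pairwise (fun i j => i.time ≤ j.time) ((List.range (2*(p-1))).map g)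
    rw [List.pairwise_map]
    exact (List.pairwise_lt_range (n := _)).imp fun {a b} hab => by
      show (g a).time ≤ (g b).time
      rw [g_time, g_time]; omega
  · show List.Pairwise (fun c c' => c.time ≤ c'.time) ((List.range (p-1)).map C)
    rw [List.pairwise_map]
    exact (List.pairwise_lt_range (n := _)).imp fun {a b} hab => by
      show (C a).time ≤ (C b).time
      rw [C_time, C_time]; omega

lemma AC_inj : Function.Injective (fun k => (A k, C k)) := by
  intro a b hab
  simp only [Prod.mk.injEq, A, Impression.mk.injEq] at hab
  exact hab.1.2.2.2.2

lemma wD_apply (k : ℕ) (hk : k < p - 1) : wD (p-1) (A k, C k) = 1 := by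
  rw [wD, Finsupp.finset_sum_apply]
  rw [Finset.sum_eq_single k]
  · exact Finsupp.single_eq_same
  · intro j _ hj
    apply Finsupp.single_eq_of_ne'
    intro h
    exact hj (AC_inj h)
  · intro h
    exact absurd (Finset.mem_range.2 hk) h

end Main
end Thm53

/-- Theorem 5.3: for last-touch attribution, the user × publisher × advertiser adjacency
relation with post-attribution enforcement is invalid: with bound `r = 1`, for every
`p > 1` there are adjacent datasets (differing by all impressions of one
(user, publisher, advertiser) triple) whose attributed datasets are at ℓ₁-distance at
least `p - 1`. -/
theorem post_attr_upa_lta_invalid (p : ℕ) (hp : 1 < p) :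
    ∃ (D D' : Dataset) (v : ℕ × ℕ × ℕ),
      RemovesScope (fun i => (i.user, i.pub, i.adv)) (fun _ => none) v D D' ∧
      SortedDS D' ∧
      (p : ℝ) - 1 ≤ l1dist (postAttr LTA (fun i => (i.user, i.pub, i.adv)) 1 D)
        (postAttr LTA (fun i => (i.user, i.pub, i.adv)) 1 D') := by
  classical
  refine ⟨Thm53.DD p, Thm53.DD' p, (0, 0, 0), ⟨?_, ?_⟩, Thm53.sorted_DD' p, ?_⟩
  · exact (Thm53.imps_filter (p-1)).symm
  · rw [show (Thm53.DD p).convs = (Thm53.DD' p).convs from rfl]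
    symm
    apply List.filter_eq_self.2
    intro a _
    simp
  · rw [show (fun i : Impression => (i.user, i.pub, i.adv)) = Thm53.sc from rfl,
      Thm53.postAttr_DD p, Thm53.postAttr_DD' p hp]
    set w := Thm53.wD (p-1) with hw
    set w' := Finsupp.single (Thm53.B 0, Thm53.C 0) (1:ℝ) with hw'
    have hd : ∀ k < p-1, (w - w') (Thm53.A k, Thm53.C k) = 1 := by
      intro k hk
      have hne : (Thm53.B 0, Thm53.C 0) ≠ (Thm53.A k, Thm53.C k) := by
        intro h
        have h2 := congrArg (fun q : Impression × Conversion => q.1.pub) h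
        simp only [Thm53.A, Thm53.B] at h2
        omega
      rw [Finsupp.sub_apply, Thm53.wD_apply p k hk, hw',
        Finsupp.single_eq_of_ne' hne, sub_zero]
    set S := (Finset.range (p-1)).image (fun k => (Thm53.A k, Thm53.C k)) with hS
    have hsub : S ⊆ (w - w').support := by
      intro x hx
      rw [hS, Finset.mem_image] at hx
      obtain ⟨k, hk, rfl⟩ := hx
      rw [Finsupp.mem_support_iff, hd k (Finset.mem_range.1 hk)]
      norm_num
    have hsum : ∑ x ∈ S, |(w - w') x| = ((p - 1 : ℕ) : ℝ) := by
      rw [hS, Finset.sum_image (fun a _ b _ h => Thm53.AC_inj h)]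
      have hone : ∀ k ∈ Finset.range (p-1), |(w - w') (Thm53.A k, Thm53.C k)| = 1 := by
        intro k hk
        rw [hd k (Finset.mem_range.1 hk)]
        norm_num
      rw [Finset.sum_congr rfl hone, Finset.sum_const, Finset.card_range, nsmul_eq_mul, mul_one]
    have hfin : l1dist w w' = ∑ x ∈ (w - w').support, |(w - w') x| := rfl
    rw [hfin]
    calc ((p:ℝ) - 1) = ((p - 1 : ℕ) : ℝ) := by
          rw [Nat.cast_sub hp.le]; norm_num
      _ = ∑ x ∈ S, |(w - w') x| := hsum.symm
      _ ≤ _ := Finset.sum_le_sum_of_subset_of_nonneg hsub (fun _ _ _ => abs_nonneg _)
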